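/- Let K be an infinite field, L a field extension of K, and A ∈ M_n(K). If there exists an invertible symmetric matrix S ∈ M_n(L) with AᵀSA = S, then there exists an invertible symmetric matrix S' ∈ M_n(K) with AᵀS'A = S'. -/

import Mathlib

open Matrix

theorem descend_symmetric_isometry {K L : Type*} [Field K] [Infinite K] [Field L]
    [Algebra K L] {n : ℕ} (A : Matrix (Fin n) (Fin n) K)
    (h : ∃ S : Matrix (Fin n) (Fin n) L, IsUnit S.det ∧ Sᵀ = S ∧
      (A.map (algebraMap K L))ᵀ * S * A.map (algebraMap K L) = S) :
    ∃ S' : Matrix (Fin n) (Fin n) K, IsUnit S'.det ∧ S'ᵀ = S' ∧ Aᵀ * S' * A = S' := by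
  classical
  obtain ⟨S, hdet, hsym, hiso⟩ := h
  set f := algebraMap K L with hf
  -- the K-span of the entries of S
  set W : Submodule K L := Submodule.span K (Set.range fun p : Fin n × Fin n => S p.1 p.2)
    with hW
  have hWfin : FiniteDimensional K W :=
    FiniteDimensional.span_of_finite K (Set.finite_range _)
  set m := Module.finrank K W with hm
  let b : Module.Basis (Fin m) K W := Module.finBasis K W
  have hmem : ∀ i j, S i j ∈ W := fun i j => Submodule.subset_span ⟨(i, j), rfl⟩
  -- coefficient matrices over K
  let M : Fin m → Matrix (Fin n) (Fin n) K := fun k => fun i j => b.repr ⟨S i j, hmem i j⟩ k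
  have li : LinearIndependent K (fun k => (b k : L)) :=
    b.linearIndependent.map' W.subtype W.ker_subtype
  -- extraction of coefficients via linear independence
  have key : ∀ X Y : Fin m → K,
      (∑ k, X k • (b k : L)) = (∑ k, Y k • (b k : L)) → X = Y := by
    intro X Y hXY
    funext k
    have h0 : ∑ k, (X - Y) k • (b k : L) = 0 := by
      simp [sub_smul, Finset.sum_sub_distrib, hXY]
    have := (Fintype.linearIndependent_iff.mp li) (X - Y) h0 k
    simpa [sub_eq_zero] using this
  have hS : ∀ i j, S i j = ∑ k, M k i j • (b k : L) := by
    intro i j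
    have h1 := congrArg (Subtype.val) (b.sum_repr ⟨S i j, hmem i j⟩)
    simpa only [M, Submodule.coe_sum, Submodule.coe_smul] using h1.symm
  have entry : ∀ (N : Fin m → Matrix (Fin n) (Fin n) K) (i j : Fin n),
      (∑ k, (b k : L) • (N k).map f) i j = ∑ k, (N k) i j • (b k : L) := by
    intro N i j
    simp only [Matrix.sum_apply, Matrix.smul_apply, Matrix.map_apply, smul_eq_mul]
    exact Finset.sum_congr rfl fun k _ => by rw [Algebra.smul_def, mul_comm]
  have hSsum : S = ∑ k, (b k : L) • (M k).map f := by
    ext i j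
    rw [entry M i j]
    exact hS i j
  -- symmetry of the coefficient matrices
  have hsymK : ∀ k, (M k)ᵀ = M k := by
    intro k
    have hij : ∀ i j : Fin n, (fun k => M k j i) = (fun k => M k i j) := by
      intro i j
      apply key
      rw [← hS j i, ← hS i j]
      exact congrFun (congrFun hsym i) j
    ext i j
    exact congrFun (hij i j) k
  -- isometry condition for the coefficient matrices
  have hisoK : ∀ k, Aᵀ * M k * A = M k := by
    have hmat : (∑ k, (b k : L) • ((Aᵀ * M k * A).map f)) = ∑ k, (b k : L) • (M k).map f := by
      calc (∑ k, (b k : L) • ((Aᵀ * M k * A).map f))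
          = (A.map f)ᵀ * (∑ k, (b k : L) • (M k).map f) * A.map f := by
            rw [Matrix.mul_sum, Matrix.sum_mul]
            refine Finset.sum_congr rfl fun k _ => ?_
            rw [Matrix.mul_smul, Matrix.smul_mul]
            congr 1
            rw [← Matrix.transpose_map, ← Matrix.map_mul, ← Matrix.map_mul]
        _ = ∑ k, (b k : L) • (M k).map f := by rw [← hSsum, hiso, hSsum]
    intro k
    ext i j
    have hij := congrFun (congrFun hmat i) j
    rw [show ((∑ k, (b k : L) • ((Aᵀ * M k * A).map f)) i j) =
        (∑ k, (b k : L) • ((fun k => Aᵀ * M k * A) k).map f) i j from rfl] at hij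
    rw [entry, entry] at hij
    exact congrFun (key _ _ hij) k
  -- the determinant polynomial
  let N : Matrix (Fin n) (Fin n) (MvPolynomial (Fin m) K) :=
    Matrix.of fun i j => ∑ k, MvPolynomial.X k * MvPolynomial.C (M k i j)
  let P : MvPolynomial (Fin m) K := N.det
  have hφP : MvPolynomial.aeval (fun k => (b k : L)) P = S.det := by
    rw [show (MvPolynomial.aeval (fun k => (b k : L)) P : L) =
        ((MvPolynomial.aeval (fun k => (b k : L))).toRingHom.mapMatrix N).det from
      RingHom.map_det _ N]
    congr 1
    ext i j
    simp only [RingHom.mapMatrix_apply, Matrix.map_apply, AlgHom.toRingHom_eq_coe,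
      RingHom.coe_coe, N, Matrix.of_apply, map_sum]
    rw [hS i j]
    refine Finset.sum_congr rfl fun k _ => ?_
    rw [_root_.map_mul, MvPolynomial.aeval_X, MvPolynomial.aeval_C, Algebra.smul_def, mul_comm]
  have hPne : P ≠ 0 := by
    intro h0
    apply hdet.ne_zero
    rw [← hφP, h0, map_zero]
  have hex : ∃ c : Fin m → K, MvPolynomial.eval c P ≠ 0 := by
    by_contra hc
    push_neg at hc
    exact hPne (MvPolynomial.funext fun x => by rw [hc x, map_zero])
  obtain ⟨c, hc⟩ := hex
  refine ⟨∑ k, c k • M k, ?_, ?_, ?_⟩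
  · have hdet' : (∑ k, c k • M k).det = MvPolynomial.eval c P := by
      rw [show (MvPolynomial.eval c P : K) = ((MvPolynomial.eval c).mapMatrix N).det from
        RingHom.map_det _ N]
      congr 1
      ext i j
      simp [N, Matrix.sum_apply]
    rw [isUnit_iff_ne_zero, hdet']
    exact hc
  · rw [Matrix.transpose_sum]
    refine Finset.sum_congr rfl fun k _ => ?_
    rw [Matrix.transpose_smul, hsymK]
  · rw [Matrix.mul_sum, Matrix.sum_mul]
    refine Finset.sum_congr rfl fun k _ => ?_
    rw [Matrix.mul_smul, Matrix.smul_mul, hisoK]
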